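/- Let m ≥ 1 be an integer. Let S be the set of vectors c = (c₁, …, c_m) ∈ ℚ^m satisfying: (i) c₁ ≥ c₂ ≥ ⋯ ≥ c_m ≥ 0; (ii) c₁ + ⋯ + c_m ≤ 1; (iii) for each 1 ≤ j ≤ m−1, if c_j > c_{j+1} then c₁ + ⋯ + c_j is an integer; (iv) if c_m > 0 then c₁ + ⋯ + c_m = 1. Then S = {0} ∪ {b_j : 1 ≤ j ≤ m}, where b_j ∈ ℚ^m is the vector whose first j coordinates equal 1/j and whose remaining coordinates are 0. In particular S has exactly m + 1 elements. -/

import Mathlib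

open Finset

/-- The vector `b_j ∈ ℚ^m` whose first `j` coordinates are `1/j` and whose
remaining coordinates are `0`.  (For `j = 0` this is the zero vector.) -/
def bvec (m j : ℕ) : Fin m → ℚ := fun i => if i.val < j then (j : ℚ)⁻¹ else 0

/-- The set of vectors `c ∈ ℚ^m` satisfying the Kottwitz conditions for
`B(SO(V)_{ℚ_p}, μ)`, `dim V = 2m + 1`:
(i) `c₁ ≥ c₂ ≥ ⋯ ≥ c_m ≥ 0`; (ii) `c₁ + ⋯ + c_m ≤ 1`;
(iii) if `c_j > c_{j+1}` (`1 ≤ j ≤ m - 1`) then `c₁ + ⋯ + c_j ∈ ℤ`;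
(iv) if `c_m > 0` then `c₁ + ⋯ + c_m = 1`. -/
def oddSONewtonSet (m : ℕ) (hm : 1 ≤ m) : Set (Fin m → ℚ) :=
  {c | (∀ i j : Fin m, i ≤ j → c j ≤ c i) ∧
       (∀ i, 0 ≤ c i) ∧
       (∑ i, c i) ≤ 1 ∧
       (∀ i : Fin m, ∀ h : i.val + 1 < m, c ⟨i.val + 1, h⟩ < c i →
          ∃ z : ℤ, (∑ j : Fin m, if j.val ≤ i.val then c j else 0) = (z : ℚ)) ∧
       (0 < c ⟨m - 1, by omega⟩ → (∑ i, c i) = 1)}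

lemma filter_lt_card (m j : ℕ) (hj : j ≤ m) :
    (Finset.univ.filter (fun i : Fin m => i.val < j)).card = j := by
  have : (Finset.univ.filter (fun i : Fin m => i.val < j))
      = Finset.map (Fin.castLEEmb hj) Finset.univ := by
    ext i
    simp only [Finset.mem_filter, Finset.mem_univ, true_and, Finset.mem_map]
    constructor
    · intro h; exact ⟨⟨i.val, h⟩, by ext; simp⟩
    · rintro ⟨k, -, rfl⟩; simp [Fin.castLEEmb]
  rw [this, Finset.card_map, Finset.card_univ, Fintype.card_fin]

lemma sum_ite_lt (m j : ℕ) (hj : j ≤ m) (x : ℚ) :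
    (∑ i : Fin m, if i.val < j then x else 0) = j * x := by
  rw [← Finset.sum_filter, Finset.sum_const, filter_lt_card m j hj, nsmul_eq_mul]

lemma bvec_sum (m j : ℕ) (hj : j ≤ m) (hj0 : 1 ≤ j) : (∑ i, bvec m j i) = 1 := by
  unfold bvec
  rw [sum_ite_lt m j hj, mul_inv_cancel₀ (Nat.cast_ne_zero.mpr (by omega) : (j:ℚ) ≠ 0)]

lemma bvec_mem (m j : ℕ) (hm : 1 ≤ m) (hj : j ≤ m) :
    bvec m j ∈ oddSONewtonSet m hm := by
  have hnn : ∀ i : Fin m, 0 ≤ bvec m j i := by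
    intro i; unfold bvec; split <;> positivity
  have hsum : (∑ i, bvec m j i) ≤ 1 := by
    rcases Nat.eq_zero_or_pos j with h | h
    · subst h; simp [bvec]
    · rw [bvec_sum m j hj h]
  refine ⟨?_, hnn, hsum, ?_, ?_⟩
  · intro i k hik
    rw [Fin.le_def] at hik
    unfold bvec
    by_cases hk : k.val < j
    · rw [if_pos hk, if_pos (by omega)]
    · rw [if_neg hk]; exact hnn i
  · intro i h hdrop
    by_cases hi : i.val < j
    · by_cases hi1 : i.val + 1 < j
      · exfalso; unfold bvec at hdrop
        rw [if_pos hi, if_pos hi1] at hdrop; exact lt_irrefl _ hdrop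
      · -- j = i.val + 1
        have hje : j = i.val + 1 := by
          have : 0 < bvec m j i := by
            refine lt_of_le_of_lt (hnn _) hdrop
          omega
        refine ⟨1, ?_⟩
        have : (∑ k : Fin m, if k.val ≤ i.val then bvec m j k else 0)
            = ∑ k : Fin m, if k.val < j then (j:ℚ)⁻¹ else 0 := by
          apply Finset.sum_congr rfl
          intro k _
          by_cases hk : k.val ≤ i.val
          · rw [if_pos hk, if_pos (by omega)]
            unfold bvec; rw [if_pos (by omega)]
          · rw [if_neg hk, if_neg (by omega)]
        rw [this, sum_ite_lt m j hj, mul_inv_cancel₀ (Nat.cast_ne_zero.mpr (by omega) : (j:ℚ) ≠ 0)]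
        norm_num
    · exfalso
      have : bvec m j i = 0 := by unfold bvec; rw [if_neg hi]
      rw [this] at hdrop
      exact absurd hdrop (not_lt.mpr (hnn _))
  · intro hpos
    have hmj : m - 1 < j := by
      by_contra h
      have : bvec m j ⟨m-1, by omega⟩ = 0 := by unfold bvec; rw [if_neg (by simpa using h)]
      rw [this] at hpos; exact lt_irrefl _ hpos
    exact bvec_sum m j hj (by omega)

lemma mem_imp (m : ℕ) (hm : 1 ≤ m) (c : Fin m → ℚ) (hc : c ∈ oddSONewtonSet m hm) :
    ∃ j : ℕ, j ≤ m ∧ c = bvec m j := by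
  obtain ⟨hmono, hnn, hsum, hint, hlast⟩ := hc
  by_cases h0 : ∀ i, c i = 0
  · exact ⟨0, Nat.zero_le m, funext fun i => by simp [bvec, h0 i]⟩
  push_neg at h0
  obtain ⟨i1, hi1⟩ := h0
  set T := Finset.univ.filter (fun i : Fin m => 0 < c i) with hT
  have hTne : T.Nonempty := by
    refine ⟨i1, ?_⟩
    simp only [hT, Finset.mem_filter, Finset.mem_univ, true_and]
    exact lt_of_le_of_ne (hnn i1) (Ne.symm hi1)
  set i0 := T.max' hTne with hi0def
  have hi0pos : 0 < c i0 := by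
    have := T.max'_mem hTne
    simpa [hT] using this
  have hzero : ∀ i : Fin m, i0 < i → c i = 0 := by
    intro i hi
    by_contra h
    have hpos := lt_of_le_of_ne (hnn i) (Ne.symm h)
    have hiT : i ∈ T := by simp [hT, hpos]
    exact absurd (T.le_max' i hiT) (not_le.mpr hi)
  have hposle : ∀ i : Fin m, i ≤ i0 → 0 < c i := fun i hi =>
    lt_of_lt_of_le hi0pos (hmono i i0 hi)
  have hsum_eq : (∑ i, c i) = (∑ i : Fin m, if i.val ≤ i0.val then c i else 0) := by
    apply Finset.sum_congr rfl
    intro i _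
    by_cases hi : i.val ≤ i0.val
    · rw [if_pos hi]
    · rw [if_neg hi, hzero i (by rwa [Fin.lt_def, ← not_le])]
  have hppos : 0 < (∑ i : Fin m, if i.val ≤ i0.val then c i else 0) := by
    rw [← hsum_eq]
    exact Finset.sum_pos' (fun i _ => hnn i) ⟨i0, Finset.mem_univ _, hi0pos⟩
  have hone : (∑ i, c i) = 1 := by
    rcases Nat.lt_or_ge (i0.val + 1) m with hlt | hge
    · have hdrop : c ⟨i0.val + 1, hlt⟩ < c i0 := by
        rw [hzero ⟨i0.val + 1, hlt⟩ (by simp [Fin.lt_def])]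
        exact hi0pos
      obtain ⟨z, hz⟩ := hint i0 hlt hdrop
      have h1 : 0 < z := by exact_mod_cast hz ▸ hppos
      have h2 : (z : ℚ) ≤ 1 := by rw [← hz, ← hsum_eq]; exact hsum
      have h2' : z ≤ 1 := by exact_mod_cast h2
      have : z = 1 := by omega
      rw [hsum_eq, hz, this]; norm_num
    · have hi0v : i0.val = m - 1 := by have := i0.isLt; omega
      apply hlast
      have : (⟨m - 1, by omega⟩ : Fin m) = i0 := by
        apply Fin.ext; simp [hi0v]
      rw [this]; exact hi0pos
  have hconst : ∀ k : ℕ, ∀ hk : k ≤ i0.val, c ⟨k, by have := i0.isLt; omega⟩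
      = c ⟨0, by omega⟩ := by
    intro k
    induction k with
    | zero => intro _; rfl
    | succ n ih =>
      intro hk
      have hn := ih (by omega)
      have hle : c ⟨n + 1, by have := i0.isLt; omega⟩ ≤ c ⟨n, by have := i0.isLt; omega⟩ :=
        hmono _ _ (by simp [Fin.le_def])
      rcases eq_or_lt_of_le hle with heq | hlt
      · rw [heq, hn]
      · exfalso
        obtain ⟨z, hz⟩ := hint ⟨n, by have := i0.isLt; omega⟩ (by simp; have := i0.isLt; omega) hlt
        have hzpos : (0:ℚ) < z := by
          rw [← hz]
          refine Finset.sum_pos' (fun i _ => by split; exacts [hnn i, le_refl 0]) ?_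
          refine ⟨⟨0, by omega⟩, Finset.mem_univ _, ?_⟩
          rw [if_pos (by simp)]
          exact hposle _ (by rw [Fin.le_def]; simp)
        have hzlt : (z:ℚ) < 1 := by
          rw [← hz, ← hone]
          apply Finset.sum_lt_sum
          · intro i _; split; exacts [le_refl _, hnn i]
          · refine ⟨⟨n + 1, by have := i0.isLt; omega⟩, Finset.mem_univ _, ?_⟩
            rw [if_neg (by simp)]
            exact hposle _ (by rw [Fin.le_def]; simpa using hk)
        have h1 : 0 < z := by exact_mod_cast hzpos
        have h2 : z < 1 := by exact_mod_cast hzlt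
        omega
  set j := i0.val + 1 with hj
  have hjm : j ≤ m := i0.isLt
  have hc0 : (j : ℚ) * c ⟨0, by omega⟩ = 1 := by
    rw [← hone, hsum_eq, ← sum_ite_lt m j hjm]
    apply Finset.sum_congr rfl
    intro i _
    by_cases hi : i.val ≤ i0.val
    · rw [if_pos hi, if_pos (by omega)]
      have : (⟨i.val, i.isLt⟩ : Fin m) = i := rfl
      rw [← this, hconst i.val hi]
    · rw [if_neg hi, if_neg (by omega)]
  have hc0v : c ⟨0, by omega⟩ = (j : ℚ)⁻¹ := by
    field_simp at hc0 ⊢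
    exact eq_one_div_of_mul_eq_one_right hc0
  refine ⟨j, hjm, funext fun i => ?_⟩
  unfold bvec
  by_cases hi : i.val < j
  · rw [if_pos hi]
    have : (⟨i.val, i.isLt⟩ : Fin m) = i := rfl
    rw [← this, hconst i.val (by omega), hc0v]
  · rw [if_neg hi, hzero i (by rw [Fin.lt_def]; omega)]

lemma bvec_zero (m : ℕ) : bvec m 0 = 0 := by
  funext i; simp [bvec]

lemma bvec_ne (m j k : ℕ) (hjk : j < k) (hk : k ≤ m) : bvec m j ≠ bvec m k := by
  intro h
  have hi : k - 1 < m := by omega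
  have h1 : bvec m k ⟨k - 1, hi⟩ = (k : ℚ)⁻¹ := by
    unfold bvec; rw [if_pos (by simp; omega)]
  have h2 : bvec m j ⟨k - 1, hi⟩ = 0 := by
    unfold bvec; rw [if_neg (by simp; omega)]
  rw [h, h1] at h2
  have : (k : ℚ) ≠ 0 := Nat.cast_ne_zero.mpr (by omega)
  exact absurd h2 (inv_ne_zero this)

/-- The Kottwitz set is exactly `{0} ∪ {b_j : 1 ≤ j ≤ m}`, and has `m + 1` elements. -/
theorem oddSONewtonSet_eq (m : ℕ) (hm : 1 ≤ m) :
    oddSONewtonSet m hm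
      = {0} ∪ {v | ∃ j : ℕ, 1 ≤ j ∧ j ≤ m ∧ v = bvec m j} ∧
    (oddSONewtonSet m hm).ncard = m + 1 := by
  have himg : oddSONewtonSet m hm = (fun j : ℕ => bvec m j) '' Set.Iic m := by
    ext c
    constructor
    · intro hc
      obtain ⟨j, hj, rfl⟩ := mem_imp m hm c hc
      exact ⟨j, hj, rfl⟩
    · rintro ⟨j, hj, rfl⟩
      exact bvec_mem m j hm hj
  constructor
  · rw [himg]
    ext c
    simp only [Set.mem_image, Set.mem_union, Set.mem_singleton_iff, Set.mem_setOf_eq,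
      Set.mem_Iic]
    constructor
    · rintro ⟨j, hj, rfl⟩
      rcases Nat.eq_zero_or_pos j with h | h
      · subst h; exact Or.inl (bvec_zero m)
      · exact Or.inr ⟨j, h, hj, rfl⟩
    · rintro (rfl | ⟨j, hj1, hjm, rfl⟩)
      · exact ⟨0, Nat.zero_le m, bvec_zero m⟩
      · exact ⟨j, hjm, rfl⟩
  · rw [himg]
    rw [Set.ncard_image_of_injOn]
    · have : (Set.Iic m : Set ℕ) = ↑(Finset.Iic m) := by simp
      rw [this, Set.ncard_coe_finset, Nat.card_Iic]
    · intro j hj k hk h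
      simp only [Set.mem_Iic] at hj hk
      by_contra hne
      rcases Nat.lt_or_ge j k with hlt | hge
      · exact bvec_ne m j k hlt hk h
      · exact bvec_ne m k j (by omega) hj h.symm
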